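/- arXiv:2005.05772 — 4 statements merged into one kernel-verified Lean document; each statement's English description precedes it below -/
import Mathlib

section
/- Let $x_1 < x_2 < \dots < x_n$ be real numbers with $x_1 \geq 0$ and $n \geq 2$, let $q_1,\dots,q_n \in (0,1)$ with $\sum_k q_k = 1$, and let $\lambda > 0$. Then there exists a unique $x^* > x_n - \lambda$ satisfying $x^* = \lambda \sum_{k=1}^n \frac{q_k x_k}{\lambda + x^* - x_k}$. -/
/-- Existence and uniqueness of the heritable-risk growth rate fixed point. -/
theorem stmt_0 (n : ℕ) (hn : 2 ≤ n) (x q : Fin n → ℝ)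
    (hx : StrictMono x) (hx0 : 0 ≤ x ⟨0, by omega⟩)
    (hq : ∀ k, q k ∈ Set.Ioo (0 : ℝ) 1) (hqsum : ∑ k, q k = 1)
    (lam : ℝ) (hlam : 0 < lam) :
    ∃! xs : ℝ, xs > x ⟨n - 1, by omega⟩ - lam ∧
      xs = lam * ∑ k, q k * x k / (lam + xs - x k) := by
  set m : Fin n := ⟨n - 1, by omega⟩ with hm
  set M := x m with hM
  have hxle : ∀ k, x k ≤ M := fun k =>
    hx.monotone (Fin.le_def.mpr (by simp [hm]; omega))
  have hx0' : ∀ k, 0 ≤ x k := fun k =>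
    hx0.trans (hx.monotone (Fin.le_def.mpr (by simp)))
  have hMpos : 0 < M := lt_of_le_of_lt hx0 (hx (Fin.lt_def.mpr (by simp [hm]; omega)))
  have hq0 : ∀ k, 0 < q k := fun k => (hq k).1
  set S : ℝ → ℝ := fun t => lam * ∑ k, q k * x k / (lam + t - x k) with hS
  set g : ℝ → ℝ := fun t => t - S t with hg
  have hden : ∀ t, M - lam < t → ∀ k, 0 < lam + t - x k := by
    intro t ht k; have := hxle k; linarith
  have hmono : StrictMonoOn g (Set.Ioi (M - lam)) := by
    intro t1 ht1 t2 ht2 h12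
    have hSle : S t2 ≤ S t1 := by
      apply mul_le_mul_of_nonneg_left _ hlam.le
      apply Finset.sum_le_sum
      intro k _
      have d1 := hden t1 ht1 k
      exact div_le_div_of_nonneg_left (mul_nonneg (hq0 k).le (hx0' k)) d1 (by linarith)
    show t1 - S t1 < t2 - S t2
    linarith
  have hcont : ContinuousOn g (Set.Ioi (M - lam)) := by
    apply ContinuousOn.sub continuousOn_id
    apply ContinuousOn.mul continuousOn_const
    apply continuousOn_finset_sum
    intro k _
    apply ContinuousOn.div continuousOn_const
    · exact ((continuous_const.add continuous_id).sub continuous_const).continuousOn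
    · intro t ht; exact (hden t ht k).ne'
  set c := lam * (q m * M) with hc
  have hcpos : 0 < c := by
    have := hq0 m; have := hMpos; positivity
  set ε := min 1 (c / (2 * (|M - lam| + 1))) with hε
  have habs : (0:ℝ) < |M - lam| + 1 := by positivity
  have hεpos : 0 < ε := lt_min one_pos (by positivity)
  have hε1 : ε ≤ 1 := min_le_left _ _
  set a := M - lam + ε with ha
  have haI : a ∈ Set.Ioi (M - lam) := by simp [ha]; linarith
  have hga : g a < 0 := by
    have hterm : q m * x m / (lam + a - x m) ≤ ∑ k, q k * x k / (lam + a - x k) :=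
      Finset.single_le_sum
        (fun k _ => div_nonneg (mul_nonneg (hq0 k).le (hx0' k)) (hden a haI k).le)
        (Finset.mem_univ m)
    have hdm : lam + a - x m = ε := by simp [ha, hM]; ring
    have hSa : c / ε ≤ S a := by
      have : c / ε = lam * (q m * x m / (lam + a - x m)) := by
        rw [hdm, hc]; field_simp; rfl
      rw [this]
      exact mul_le_mul_of_nonneg_left hterm hlam.le
    have haε : a * ε < c := by
      have hM' : a ≤ |M - lam| + 1 := by
        have := le_abs_self (M - lam); simp [ha]; linarith
      calc a * ε ≤ (|M - lam| + 1) * ε := mul_le_mul_of_nonneg_right hM' hεpos.le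
        _ ≤ (|M - lam| + 1) * (c / (2 * (|M - lam| + 1))) := by
            apply mul_le_mul_of_nonneg_left (min_le_right _ _) habs.le
        _ = c / 2 := by field_simp
        _ < c := by linarith
    have : a < c / ε := (lt_div_iff₀ hεpos).mpr haε
    show a - S a < 0
    linarith
  set b := M + 1 with hb
  have hbI : b ∈ Set.Ioi (M - lam) := by simp [hb]; linarith
  have hgb : 0 < g b := by
    have hSb : S b ≤ M := by
      have hsum : ∑ k, q k * x k / (lam + b - x k) ≤ ∑ k, q k * (M / lam) := by
        apply Finset.sum_le_sum
        intro k _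
        have hd := hden b hbI k
        have h1 : q k * x k / (lam + b - x k) ≤ q k * x k / lam := by
          apply div_le_div_of_nonneg_left (mul_nonneg (hq0 k).le (hx0' k)) hlam
          have := hxle k; simp [hb] at hd ⊢; linarith
        have h2 : q k * x k / lam ≤ q k * (M / lam) := by
          rw [mul_div_assoc]
          apply mul_le_mul_of_nonneg_left _ (hq0 k).le
          gcongr
          exact hxle k
        linarith
      have : ∑ k, q k * (M / lam) = M / lam := by
        rw [← Finset.sum_mul, hqsum, one_mul]
      rw [hS]
      calc lam * ∑ k, q k * x k / (lam + b - x k) ≤ lam * (M / lam) := by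
            apply mul_le_mul_of_nonneg_left _ hlam.le
            rw [← this]; exact hsum
        _ = M := by field_simp
    show 0 < b - S b
    simp only [hb] at *
    linarith
  have hab : a ≤ b := by simp [ha, hb]; linarith
  have hsub : Set.Icc a b ⊆ Set.Ioi (M - lam) := by
    intro t ht
    exact lt_of_lt_of_le haI ht.1
  obtain ⟨xs, hxsmem, hgxs⟩ :=
    intermediate_value_Icc hab (hcont.mono hsub) ⟨hga.le, hgb.le⟩
  have hxsI : xs ∈ Set.Ioi (M - lam) := hsub hxsmem
  refine ⟨xs, ⟨hxsI, ?_⟩, ?_⟩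
  · have : xs - S xs = 0 := hgxs
    simp only [hS] at this
    linarith
  · rintro y ⟨hy1, hy2⟩
    have hgy : g y = 0 := by
      show y - S y = 0
      simp only [hS]
      linarith
    exact hmono.injOn hy1 hxsI (by rw [hgy, hgxs])
end

section
/- Let $(x_k, q_k)_{k=1}^n$ and $(x'_j, q'_j)_{j=1}^{n'}$ be two finitely supported probability distributions on $[0,\infty)$ with at least two support points each, such that $(x', q')$ is a strict mean-preserving spread of $(x, q)$ (i.e., they have equal mean and $\mathbb{E}[\phi(x')] > \mathbb{E}[\phi(x)]$ for every strictly convex function $\phi$). Let $\lambda > 0$ and let $x^*$ (resp. $x^{*\prime}$) denote the unique solution in $(\max_k x_k - \lambda, \max_k x_k)$ (resp. the corresponding interval for $x'$) of the equation $x = \lambda \sum_k \frac{q_k x_k}{\lambda + x - x_k}$ (resp. with primed quantities). Then $x^{*\prime} > x^*$. -/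
theorem aux_hasDeriv (A c d : ℝ) (hdc : d < c) (t : ℝ) :
    HasDerivAt (fun t : ℝ => if t ≤ d then A / (c - t)
      else A * (3*(c-d)^2 - 3*(c-d)*(c-t) + (c-t)^2)/(c-d)^3)
      (if t ≤ d then A / (c - t)^2 else A * (3*(c-d) - 2*(c-t))/(c-d)^3) t := by
  have hs0 : (0:ℝ) < c - d := by linarith
  have hu : ∀ s : ℝ, HasDerivAt (fun y : ℝ => c - y) (-1) s := fun s =>
    (hasDerivAt_id s).const_sub c
  have h1 : ∀ s : ℝ, s < c → HasDerivAt (fun y : ℝ => A / (c - y)) (A / (c - s)^2) s := by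
    intro s hs
    have hne : c - s ≠ 0 := ne_of_gt (by linarith)
    have := ((hu s).fun_inv hne).const_mul A
    convert this using 1
    · rfl
    · rfl
    · funext y; ring
    · ring
  have h2 : ∀ s : ℝ, HasDerivAt
      (fun y : ℝ => A * (3*(c-d)^2 - 3*(c-d)*(c-y) + (c-y)^2)/(c-d)^3)
      (A * (3*(c-d) - 2*(c-s))/(c-d)^3) s := by
    intro s
    have hpow : HasDerivAt (fun y : ℝ => (c - y)^2) (2*(c-s)*(-1)) s := by
      simpa using (hu s).fun_pow 2
    have hlin : HasDerivAt (fun y : ℝ => 3*(c-d)^2 - 3*(c-d)*(c-y)) (-(3*(c-d)*(-1))) s := by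
      simpa using ((hu s).const_mul (3*(c-d))).const_sub (3*(c-d)^2)
    have := ((hlin.fun_add hpow).const_mul A).div_const ((c-d)^3)
    convert this using 1
    · rfl
    · rfl
    · ring
  rcases lt_trichotomy t d with h | h | h
  · rw [if_pos h.le]
    refine (h1 t (by linarith)).congr_of_eventuallyEq ?_
    filter_upwards [Iio_mem_nhds h] with y hy
    rw [if_pos (le_of_lt hy)]
  · subst h
    rw [if_pos le_rfl]
    have hA1 : HasDerivWithinAt (fun y : ℝ => if y ≤ t then A / (c - y)
        else A * (3*(c-t)^2 - 3*(c-t)*(c-y) + (c-y)^2)/(c-t)^3) (A / (c - t)^2)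
        (Set.Iic t) t := by
      refine ((h1 t hdc).hasDerivWithinAt).congr (fun y hy => ?_) (by rw [if_pos le_rfl])
      rw [if_pos (Set.mem_Iic.mp hy)]
    have hA2 : HasDerivWithinAt (fun y : ℝ => if y ≤ t then A / (c - y)
        else A * (3*(c-t)^2 - 3*(c-t)*(c-y) + (c-y)^2)/(c-t)^3) (A / (c - t)^2)
        (Set.Ici t) t := by
      have h2' := (h2 t).hasDerivWithinAt (s := Set.Ici t)
      have hval : A * (3*(c-t) - 2*(c-t))/(c-t)^3 = A / (c-t)^2 := by
        rw [div_eq_div_iff (by positivity) (by positivity)]; ring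
      rw [hval] at h2'
      refine h2'.congr (fun y hy => ?_) ?_
      · rcases eq_or_lt_of_le (Set.mem_Ici.mp hy) with h | h
        · rw [if_pos h.symm.le, ← h]
          rw [div_eq_div_iff (by positivity) (by positivity)]; ring
        · rw [if_neg (not_le.mpr h)]
      · rw [if_pos le_rfl]
        rw [div_eq_div_iff (by positivity) (by positivity)]; ring
    have := hA1.union hA2
    rw [Set.Iic_union_Ici] at this
    exact this.hasDerivAt (by simp)
  · rw [if_neg (not_le.mpr h)]
    refine (h2 t).congr_of_eventuallyEq ?_
    filter_upwards [Ioi_mem_nhds h] with y hy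
    rw [if_neg (not_le.mpr hy)]

theorem aux_sconv (A c d : ℝ) (hA : 0 < A) (hdc : d < c) :
    StrictConvexOn ℝ Set.univ (fun t : ℝ => if t ≤ d then A / (c - t)
      else A * (3*(c-d)^2 - 3*(c-d)*(c-t) + (c-t)^2)/(c-d)^3) := by
  have hs0 : (0:ℝ) < c - d := by linarith
  set D : ℝ → ℝ := fun t => if t ≤ d then A / (c - t)^2 else A * (3*(c-d) - 2*(c-t))/(c-d)^3
    with hD
  have hder := aux_hasDeriv A c d hdc
  have hmono : StrictMono D := by
    intro a b hab
    simp only [hD]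
    rcases le_or_gt b d with hb | hb
    · rw [if_pos hb, if_pos (hab.le.trans hb)]
      rw [div_lt_div_iff₀ (by nlinarith) (by nlinarith)]
      nlinarith [mul_pos (mul_pos hA (show (0:ℝ) < b - a by linarith))
        (show (0:ℝ) < 2*c - a - b by linarith)]
    · rw [if_neg (not_le.mpr hb)]
      rcases le_or_gt a d with ha | ha
      · rw [if_pos ha]
        rw [div_lt_div_iff₀ (by nlinarith) (by positivity)]
        have h1 : (c-d)^2 ≤ (c-a)^2 := by nlinarith
        have h2 : c - d < 3*(c-d) - 2*(c-b) := by linarith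
        calc A*(c-d)^3 = (A*(c-d))*(c-d)^2 := by ring
          _ < (A*(3*(c-d)-2*(c-b)))*(c-d)^2 := by
              apply mul_lt_mul_of_pos_right _ (by positivity)
              nlinarith
          _ ≤ (A*(3*(c-d)-2*(c-b)))*(c-a)^2 := by
              apply mul_le_mul_of_nonneg_left h1
              nlinarith
          _ = A*(3*(c-d)-2*(c-b))*(c-a)^2 := by ring
      · rw [if_neg (not_le.mpr ha)]
        rw [div_lt_div_iff₀ (by positivity) (by positivity)]
        nlinarith [mul_pos (mul_pos hA (show (0:ℝ) < b - a by linarith)) (pow_pos hs0 3)]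
  apply StrictMono.strictConvexOn_univ_of_deriv
  · exact continuous_iff_continuousAt.mpr fun t => (hder t).continuousAt
  · have : deriv (fun t : ℝ => if t ≤ d then A / (c - t)
      else A * (3*(c-d)^2 - 3*(c-d)*(c-t) + (c-t)^2)/(c-d)^3) = D := by
      funext t; exact (hder t).deriv
    rw [this]; exact hmono
/-- A strict mean-preserving spread strictly increases the heritable-risk growth rate. -/
theorem stmt_4 (n n' : ℕ) (hn : 2 ≤ n) (hn' : 2 ≤ n')
    (x q : Fin n → ℝ) (x' q' : Fin n' → ℝ)
    (hx : StrictMono x) (hx' : StrictMono x')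
    (hx0 : ∀ k, 0 ≤ x k) (hx0' : ∀ j, 0 ≤ x' j)
    (hq : ∀ k, q k ∈ Set.Ioo (0 : ℝ) 1) (hq' : ∀ j, q' j ∈ Set.Ioo (0 : ℝ) 1)
    (hqsum : ∑ k, q k = 1) (hqsum' : ∑ j, q' j = 1)
    (hmean : ∑ j, q' j * x' j = ∑ k, q k * x k)
    (hmps : ∀ φ : ℝ → ℝ, StrictConvexOn ℝ Set.univ φ →
      ∑ j, q' j * φ (x' j) > ∑ k, q k * φ (x k))
    (lam : ℝ) (hlam : 0 < lam) (xs xs' : ℝ)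
    (hxs : xs ∈ Set.Ioo (x ⟨n - 1, by omega⟩ - lam) (x ⟨n - 1, by omega⟩))
    (heq : xs = lam * ∑ k, q k * x k / (lam + xs - x k))
    (hxs' : xs' ∈ Set.Ioo (x' ⟨n' - 1, by omega⟩ - lam) (x' ⟨n' - 1, by omega⟩))
    (heq' : xs' = lam * ∑ j, q' j * x' j / (lam + xs' - x' j)) :
    xs' > xs := by
  by_contra hcon
  push_neg at hcon
  obtain ⟨hxs1, hxs2⟩ := hxs
  obtain ⟨hxs'1, hxs'2⟩ := hxs'
  have hM : ∀ k, x k ≤ x ⟨n - 1, by omega⟩ := fun k => hx.monotone (by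
    rw [Fin.le_def]; have := k.isLt; simp; omega)
  have hM' : ∀ j, x' j ≤ x' ⟨n' - 1, by omega⟩ := fun j => hx'.monotone (by
    rw [Fin.le_def]; have := j.isLt; simp; omega)
  rcases le_or_gt (lam + xs) (x' ⟨n' - 1, by omega⟩) with hcase | hcase
  · -- easy case: xs ≤ x'max - lam < xs'
    linarith
  · -- main case
    have hM0 : 0 ≤ x ⟨n - 1, by omega⟩ := hx0 _
    have hc0 : 0 < lam + xs := by linarith
    have hck : ∀ k, x k < lam + xs := fun k => lt_of_le_of_lt (hM k) (by linarith)
    have hcj : ∀ j, x' j < lam + xs := fun j => lt_of_le_of_lt (hM' j) hcase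
    set c : ℝ := lam + xs with hcdef
    set d : ℝ := max (x ⟨n - 1, by omega⟩) (x' ⟨n' - 1, by omega⟩) with hddef
    have hdc : d < c := max_lt (by linarith) hcase
    have hA : 0 < lam * c := by positivity
    have hconv := aux_sconv (lam * c) c d hA hdc
    have key := hmps _ hconv
    have hdk : ∀ k, x k ≤ d := fun k => le_trans (hM k) (le_max_left _ _)
    have hdj : ∀ j, x' j ≤ d := fun j => le_trans (hM' j) (le_max_right _ _)
    have hsum1 : ∑ k, q k * (if x k ≤ d then lam * c / (c - x k)
        else lam * c * (3*(c-d)^2 - 3*(c-d)*(c - x k) + (c - x k)^2)/(c-d)^3)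
        = xs + lam := by
      have hterm : ∀ k : Fin n, q k * (if x k ≤ d then lam * c / (c - x k)
          else lam * c * (3*(c-d)^2 - 3*(c-d)*(c - x k) + (c - x k)^2)/(c-d)^3)
          = lam * (q k * x k / (lam + xs - x k)) + q k * lam := by
        intro k
        rw [if_pos (hdk k)]
        have hpos : (0:ℝ) < c - x k := by have := hck k; linarith
        rw [hcdef] at hpos ⊢
        field_simp
        ring
      rw [Finset.sum_congr rfl fun k _ => hterm k, Finset.sum_add_distrib,
        ← Finset.mul_sum, ← Finset.sum_mul, hqsum, ← heq, one_mul]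
    have hsum2 : ∑ j, q' j * (if x' j ≤ d then lam * c / (c - x' j)
        else lam * c * (3*(c-d)^2 - 3*(c-d)*(c - x' j) + (c - x' j)^2)/(c-d)^3)
        = lam * (∑ j, q' j * x' j / (lam + xs - x' j)) + lam := by
      have hterm : ∀ j : Fin n', q' j * (if x' j ≤ d then lam * c / (c - x' j)
          else lam * c * (3*(c-d)^2 - 3*(c-d)*(c - x' j) + (c - x' j)^2)/(c-d)^3)
          = lam * (q' j * x' j / (lam + xs - x' j)) + q' j * lam := by
        intro j
        rw [if_pos (hdj j)]
        have hpos : (0:ℝ) < c - x' j := by have := hcj j; linarith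
        rw [hcdef] at hpos ⊢
        field_simp
        ring
      rw [Finset.sum_congr rfl fun j _ => hterm j, Finset.sum_add_distrib,
        ← Finset.mul_sum, ← Finset.sum_mul, hqsum', one_mul]
    rw [hsum1, hsum2] at key
    -- key : lam * S + lam > xs + lam  where S uses denominator (lam + xs - x' j)
    have hden' : ∀ j, 0 < lam + xs' - x' j := fun j => by
      have := hM' j; linarith
    have hstep : ∑ j, q' j * x' j / (lam + xs - x' j)
        ≤ ∑ j, q' j * x' j / (lam + xs' - x' j) := by
      apply Finset.sum_le_sum
      intro j _
      have h1 : 0 ≤ q' j * x' j := mul_nonneg (hq' j).1.le (hx0' j)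
      have h2 : lam + xs' - x' j ≤ lam + xs - x' j := by linarith
      exact div_le_div_of_nonneg_left h1 (hden' j) h2
    have := mul_le_mul_of_nonneg_left hstep hlam.le
    linarith [heq'.ge, heq'.le]
end

section
/- In the binary case, let $x_\ell < x_h$ with $x_\ell \geq 0$, let $q \in (0,1)$ be the probability of $x_h$, write $\Delta x = x_h - x_\ell$ and $\mu = q x_h + (1-q) x_\ell$, and let $\lambda > 0$. Then the unique solution $x^* \in (x_h - \lambda, x_h)$ of $x^* = \lambda\left(\frac{q x_h}{\lambda + x^* - x_h} + \frac{(1-q) x_\ell}{\lambda + x^* - x_\ell}\right)$ is given explicitly by $x^* = \mu + \frac{\Delta x (1 - 2q) - \lambda + \sqrt{(\Delta x - \lambda)^2 + 4 q \Delta x \lambda}}{2}$. -/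
/-- Explicit formula for the heritable-risk growth rate with a binary lottery. -/
theorem stmt_8 (xl xh : ℝ) (hxl : 0 ≤ xl) (hlt : xl < xh)
    (q : ℝ) (hq : q ∈ Set.Ioo (0 : ℝ) 1) (lam : ℝ) (hlam : 0 < lam)
    (xs : ℝ) (hmem : xs ∈ Set.Ioo (xh - lam) xh)
    (heq : xs = lam * (q * xh / (lam + xs - xh) + (1 - q) * xl / (lam + xs - xl))) :
    xs = (q * xh + (1 - q) * xl) +
      ((xh - xl) * (1 - 2 * q) - lam +
        Real.sqrt (((xh - xl) - lam) ^ 2 + 4 * q * (xh - xl) * lam)) / 2 := by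
  obtain ⟨hq0, hq1⟩ := hq
  obtain ⟨h1, h2⟩ := hmem
  have d1 : (0:ℝ) < lam + xs - xh := by linarith
  have d2 : (0:ℝ) < lam + xs - xl := by linarith
  have hP : xs * (lam + xs - xh) * (lam + xs - xl)
      = lam * (q * xh * (lam + xs - xl) + (1 - q) * xl * (lam + xs - xh)) := by
    have h := heq
    field_simp at h
    linear_combination h
  have hxs : 0 < xs + lam := by linarith
  -- the quadratic factor vanishes
  have hQ : (xs - xl) ^ 2 + (xs - xl) * (lam - (xh - xl)) - q * lam * (xh - xl) = 0 := by
    have hfac : ((xs - xl) ^ 2 + (xs - xl) * (lam - (xh - xl)) - q * lam * (xh - xl))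
        * (xs + lam) = 0 := by linear_combination hP
    rcases mul_eq_zero.mp hfac with h | h
    · exact h
    · linarith
  set t := xs - xl with ht
  have hqd : 0 < q * lam * (xh - xl) := mul_pos (mul_pos hq0 hlam) (sub_pos.mpr hlt)
  have htpos : 0 < t := by nlinarith
  have hA : 0 < 2 * xs - xh - xl + lam := by nlinarith
  have hA2 : (2 * xs - xh - xl + lam) ^ 2
      = ((xh - xl) - lam) ^ 2 + 4 * q * (xh - xl) * lam := by nlinarith
  have hs : Real.sqrt (((xh - xl) - lam) ^ 2 + 4 * q * (xh - xl) * lam)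
      = 2 * xs - xh - xl + lam := by
    rw [← hA2, Real.sqrt_sq hA.le]
  rw [hs]; ring
end

section
/- Let $\Delta x > 0$, $q \in (0,1)$, $\mu \in \mathbb{R}$, and define $f(\lambda) = \mu + \frac{\Delta x (1 - 2q) - \lambda + \sqrt{(\Delta x - \lambda)^2 + 4 q \Delta x \lambda}}{2}$ for $\lambda > 0$. Then $f$ is strictly decreasing in $\lambda$. -/
/-- The explicit binary-lottery growth rate is strictly decreasing in the
redraw rate. -/
theorem stmt_11 (dx q mu : ℝ) (hdx : 0 < dx) (hq : q ∈ Set.Ioo (0 : ℝ) 1) :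
    StrictAntiOn
      (fun lam : ℝ =>
        mu + (dx * (1 - 2 * q) - lam +
          Real.sqrt ((dx - lam) ^ 2 + 4 * q * dx * lam)) / 2)
      (Set.Ioi 0) := by
  rintro a ha b hb hab
  simp only [Set.mem_Ioi] at ha hb
  have hq1 := hq.1
  have hq2 := hq.2
  have hAa : (0:ℝ) ≤ (dx - a)^2 + 4*q*dx*a := by nlinarith [sq_nonneg (dx - a), mul_pos (mul_pos hq1 hdx) ha]
  have key : a + dx*(2*q-1) < Real.sqrt ((dx - a)^2 + 4*q*dx*a) := by
    rcases le_or_gt 0 (a + dx*(2*q-1)) with h | h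
    · rw [Real.lt_sqrt h]
      nlinarith [mul_pos hdx hdx, mul_pos hq1 (sub_pos.mpr hq2)]
    · exact lt_of_lt_of_le h (Real.sqrt_nonneg _)
  have hs := Real.sq_sqrt hAa
  have hsn := Real.sqrt_nonneg ((dx - a)^2 + 4*q*dx*a)
  have main : Real.sqrt ((dx - b)^2 + 4*q*dx*b)
      < (b - a) + Real.sqrt ((dx - a)^2 + 4*q*dx*a) := by
    rw [Real.sqrt_lt' (by linarith)]
    nlinarith [mul_pos (sub_pos.mpr hab) (sub_pos.mpr key)]
  simp only
  linarith
end
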